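/- Pairs of ν-biased bases of ℂ³ for the Feige matrix ν are unique up to a single unitary: let ν be the 3×3 matrix ν = [[9/16, 1/16, 3/8], [1/16, 9/16, 3/8], [3/8, 3/8, 1/4]]. Suppose ({e_i}_{i=1}^3, {f_j}_{j=1}^3) and ({e'_i}_{i=1}^3, {f'_j}_{j=1}^3) are two pairs of orthonormal bases of ℂ³ satisfying |⟨e_i, f_j⟩|² = ν_{ij} and |⟨e'_i, f'_j⟩|² = ν_{ij} for all i, j. Then there exists a unitary U on ℂ³ such that U |e_i⟩⟨e_i| U* = |e'_i⟩⟨e'_i| and U |f_j⟩⟨f_j| U* = |f'_j⟩⟨f'_j| for all i, j (with the same index labels, no relabeling). -/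

import Mathlib

open BigOperators Matrix

/-- The rank-one projection `|u⟩⟨u|` associated with a vector `u ∈ ℂ³`. -/
def outer (u : Fin 3 → ℂ) : Matrix (Fin 3) (Fin 3) ℂ :=
  Matrix.vecMulVec u (star u)

/-- The Feige matrix `ν = [[9/16, 1/16, 3/8], [1/16, 9/16, 3/8], [3/8, 3/8, 1/4]]`. -/
noncomputable def feigeNu : Matrix (Fin 3) (Fin 3) ℝ :=
  !![9/16, 1/16, 3/8; 1/16, 9/16, 3/8; 3/8, 3/8, 1/4]

set_option linter.unreachableTactic false
set_option linter.unusedTactic false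

private lemma gram3 (g : Fin 3 → Fin 3 → ℂ)
    (hg : ∀ i j, star (g i) ⬝ᵥ g j = if i = j then 1 else 0) :
    (Matrix.of g) * (Matrix.of g)ᴴ = 1 := by
  ext i j
  have h1 := hg j i
  simp only [dotProduct, Pi.star_apply] at h1
  rw [Matrix.mul_apply]
  calc ∑ k, Matrix.of g i k * (Matrix.of g)ᴴ k j
      = ∑ k, star (g j k) * g i k := by
        refine Finset.sum_congr rfl fun k _ => ?_
        rw [Matrix.conjTranspose_apply, Matrix.of_apply, Matrix.of_apply, mul_comm]
    _ = if j = i then 1 else 0 := h1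
    _ = (1 : Matrix (Fin 3) (Fin 3) ℂ) i j := by
        by_cases h : i = j
        · simp [h, Matrix.one_apply]
        · simp [h, Ne.symm h, Matrix.one_apply]

private lemma comp3 (g : Fin 3 → Fin 3 → ℂ)
    (hg : ∀ i j, star (g i) ⬝ᵥ g j = if i = j then 1 else 0) :
    ∀ a b, (∑ i, g i a * star (g i b)) = if a = b then 1 else 0 := by
  intro a b
  have hC : (Matrix.of fun a i => g i a)ᴴ * (Matrix.of fun a i => g i a) = 1 := by
    ext i j
    simpa [Matrix.mul_apply, Matrix.conjTranspose_apply, dotProduct, Matrix.one_apply]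
      using hg i j
  rw [mul_eq_one_comm] at hC
  have := congrFun (congrFun hC a) b
  simpa [Matrix.mul_apply, Matrix.conjTranspose_apply, Matrix.one_apply] using this

private lemma transition_unitary (e f : Fin 3 → (Fin 3 → ℂ))
    (he : ∀ i j, star (e i) ⬝ᵥ e j = if i = j then 1 else 0)
    (hf : ∀ i j, star (f i) ⬝ᵥ f j = if i = j then 1 else 0) :
    (∀ j j', ∑ i, star (star (e i) ⬝ᵥ f j) * (star (e i) ⬝ᵥ f j')
        = if j = j' then 1 else 0) ∧
    (∀ i i', ∑ j, (star (e i) ⬝ᵥ f j) * star (star (e i') ⬝ᵥ f j)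
        = if i = i' then 1 else 0) := by
  classical
  let c := starRingEnd ℂ
  set E : Matrix (Fin 3) (Fin 3) ℂ := Matrix.of e with hEdef
  set F : Matrix (Fin 3) (Fin 3) ℂ := Matrix.of f with hFdef
  set M : Matrix (Fin 3) (Fin 3) ℂ := E.map c * Fᵀ with hMdef
  have hmapH : ∀ (A : Matrix (Fin 3) (Fin 3) ℂ), (A.map c)ᴴ = Aᵀ := by
    intro A; ext i j
    show star (c (A j i)) = A j i
    exact star_star _
  have htH : ∀ (A : Matrix (Fin 3) (Fin 3) ℂ), (Aᵀ)ᴴ = A.map c := by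
    intro A; ext i j
    rfl
  have hE : E * Eᴴ = 1 := gram3 e he
  have hF : F * Fᴴ = 1 := gram3 f hf
  have hE' : Eᴴ * E = 1 := (mul_eq_one_comm).mp hE
  have hF' : Fᴴ * F = 1 := (mul_eq_one_comm).mp hF
  have hEH : Eᴴ = (E.map c)ᵀ := by ext i j; rfl
  have hFH : Fᴴ = (F.map c)ᵀ := by ext i j; rfl
  have hFt : Fᵀ * F.map c = 1 := by
    have h2 : (F.map c)ᵀ * F = 1 := by rw [← hFH]; exact hF'
    have := congrArg Matrix.transpose h2
    simpa [Matrix.transpose_mul] using this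
  have hEt : Eᵀ * E.map c = 1 := by
    have h2 : (E.map c)ᵀ * E = 1 := by rw [← hEH]; exact hE'
    have := congrArg Matrix.transpose h2
    simpa [Matrix.transpose_mul] using this
  have hEc : E.map c * Eᵀ = 1 := (mul_eq_one_comm).mp hEt
  have hMH : Mᴴ = F.map c * Eᵀ := by
    rw [hMdef, Matrix.conjTranspose_mul, htH, hmapH]
  have hMM : M * Mᴴ = 1 := by
    rw [hMH, hMdef, Matrix.mul_assoc, ← Matrix.mul_assoc Fᵀ, hFt, Matrix.one_mul, hEc]
  have hMM' : Mᴴ * M = 1 := (mul_eq_one_comm).mp hMM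
  have hMent : ∀ i j, M i j = star (e i) ⬝ᵥ f j := by
    intro i j
    rw [hMdef, Matrix.mul_apply]
    refine Finset.sum_congr rfl fun k _ => rfl
  constructor
  · intro j j'
    have h3 := congrFun (congrFun hMM' j) j'
    rw [Matrix.mul_apply] at h3
    simp only [Matrix.conjTranspose_apply, Matrix.one_apply] at h3
    rw [← h3]
    exact Finset.sum_congr rfl fun i _ => by rw [hMent i j, hMent i j']
  · intro i i'
    have h3 := congrFun (congrFun hMM i) i'
    rw [Matrix.mul_apply] at h3
    simp only [Matrix.conjTranspose_apply, Matrix.one_apply] at h3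
    rw [← h3]
    exact Finset.sum_congr rfl fun j _ => by rw [hMent, hMent]

noncomputable def sq6 : ℝ := Real.sqrt 6

lemma sq6_sq : sq6 * sq6 = 6 := Real.mul_self_sqrt (by norm_num)
lemma sq6_pos : 0 < sq6 := Real.sqrt_pos.mpr (by norm_num)

noncomputable def M0 : Fin 3 → Fin 3 → ℝ :=
  ![![3/4, 1/4, sq6/4], ![1/4, 3/4, -(sq6/4)], ![sq6/4, -(sq6/4), -(1/2)]]

lemma M0_sq : ∀ i j, M0 i j ^ 2 = feigeNu i j := by
  intro i j
  fin_cases i <;> fin_cases j <;>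
    simp [M0, feigeNu, pow_two] <;> nlinarith [sq6_sq]

lemma rigidity (M : Fin 3 → Fin 3 → ℂ)
    (hcol : ∀ j j', ∑ i, star (M i j) * M i j' = if j = j' then 1 else 0)
    (hrow : ∀ i i', ∑ j, M i j * star (M i' j) = if i = i' then 1 else 0)
    (habs : ∀ i j, Complex.normSq (M i j) = feigeNu i j) :
    ∃ α β : Fin 3 → ℂ, (∀ i, α i * star (α i) = 1) ∧ (∀ j, β j * star (β j) = 1) ∧
      ∀ i j, M i j = α i * β j * ((M0 i j : ℝ) : ℂ) := by
  classical
  -- positivity of first row/column of M0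
  have hpos0 : ∀ j, 0 < M0 0 j := by
    intro j; fin_cases j <;> simp [M0, sq6] <;> positivity
  have hposc : ∀ i, 0 < M0 i 0 := by
    intro i; fin_cases i <;> simp [M0, sq6] <;> positivity
  have hne0 : ∀ j, ((M0 0 j : ℝ) : ℂ) ≠ 0 := fun j =>
    Complex.ofReal_ne_zero.mpr (ne_of_gt (hpos0 j))
  have hnec : ∀ i, ((M0 i 0 : ℝ) : ℂ) ≠ 0 := fun i =>
    Complex.ofReal_ne_zero.mpr (ne_of_gt (hposc i))
  -- M entries in first row/column are nonzero
  have hMne : ∀ j, M 0 j ≠ 0 := by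
    intro j hz
    have := habs 0 j
    rw [hz] at this
    simp only [map_zero] at this
    have : (0:ℝ) = M0 0 j ^2 := by rw [M0_sq]; exact this
    nlinarith [hpos0 j]
  set β : Fin 3 → ℂ := fun j => M 0 j / ((M0 0 j : ℝ) : ℂ) with hβdef
  set α : Fin 3 → ℂ := fun i => M i 0 / (((M0 i 0 : ℝ) : ℂ) * β 0) with hαdef
  have hβn : ∀ j, Complex.normSq (β j) = 1 := by
    intro j
    rw [hβdef]
    simp only [map_div₀, Complex.normSq_ofReal]
    rw [habs 0 j, ← M0_sq 0 j, pow_two,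
      div_self (mul_ne_zero (hpos0 j).ne' (hpos0 j).ne')]
  have hβne : ∀ j, β j ≠ 0 := by
    intro j hz
    have := hβn j; rw [hz] at this; simp at this
  have hα0 : α 0 = 1 := by
    rw [hαdef, hβdef]
    simp only
    rw [mul_div_cancel₀ _ (hne0 0), div_self (hMne 0)]
  have hαn : ∀ i, Complex.normSq (α i) = 1 := by
    intro i
    rw [hαdef]
    simp only [map_div₀, _root_.map_mul, Complex.normSq_ofReal, hβn 0, mul_one]
    rw [habs i 0, ← M0_sq i 0, pow_two,
      div_self (mul_ne_zero (hposc i).ne' (hposc i).ne')]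
  have hαne : ∀ i, α i ≠ 0 := by
    intro i hz
    have := hαn i; rw [hz] at this; simp at this
  have hαu : ∀ i, α i * star (α i) = 1 := by
    intro i
    show α i * (starRingEnd ℂ) (α i) = 1
    rw [Complex.mul_conj, hαn i, Complex.ofReal_one]
  have hβu : ∀ j, β j * star (β j) = 1 := by
    intro j
    show β j * (starRingEnd ℂ) (β j) = 1
    rw [Complex.mul_conj, hβn j, Complex.ofReal_one]
  set N : Fin 3 → Fin 3 → ℂ := fun i j => star (α i) * star (β j) * M i j with hNdef
  have hNc : ∀ i, N i 0 = ((M0 i 0 : ℝ) : ℂ) := by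
    intro i
    rw [hNdef]; simp only
    have h1 : M i 0 = α i * (((M0 i 0:ℝ):ℂ) * β 0) := by
      rw [hαdef]; simp only
      rw [div_mul_cancel₀]
      exact mul_ne_zero (hnec i) (hβne 0)
    rw [h1]
    linear_combination (((M0 i 0:ℝ):ℂ) * β 0 * star (β 0)) * hαu i + ((M0 i 0:ℝ):ℂ) * hβu 0
  have hNr : ∀ j, N 0 j = ((M0 0 j : ℝ):ℂ) := by
    intro j
    rw [hNdef]; simp only [hα0, star_one, one_mul]
    have h1 : M 0 j = β j * ((M0 0 j:ℝ):ℂ) := by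
      rw [hβdef]; simp only
      rw [div_mul_cancel₀ _ (hne0 j)]
    rw [h1]
    linear_combination ((M0 0 j:ℝ):ℂ) * hβu j
  have hNabs : ∀ i j, Complex.normSq (N i j) = feigeNu i j := by
    intro i j
    rw [hNdef]; simp only [_root_.map_mul]
    rw [show Complex.normSq (star (α i)) = Complex.normSq (α i) from Complex.normSq_conj _]
    rw [show Complex.normSq (star (β j)) = Complex.normSq (β j) from Complex.normSq_conj _]
    rw [hαn i, hβn j, habs i j]; ring
  -- three orthogonality relations for N
  have hcol01 : star (N 0 0) * N 0 1 + star (N 1 0) * N 1 1 + star (N 2 0) * N 2 1 = 0 := by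
    have h := hcol 0 1
    rw [if_neg (by decide), Fin.sum_univ_three] at h
    rw [hNdef]; simp only [star_mul', star_star]
    linear_combination (β 0 * star (β 1) * star (M 0 0) * M 0 1) * hαu 0
      + (β 0 * star (β 1) * star (M 1 0) * M 1 1) * hαu 1
      + (β 0 * star (β 1) * star (M 2 0) * M 2 1) * hαu 2
      + (β 0 * star (β 1)) * h
  have hcol02 : star (N 0 0) * N 0 2 + star (N 1 0) * N 1 2 + star (N 2 0) * N 2 2 = 0 := by
    have h := hcol 0 2
    rw [if_neg (by decide), Fin.sum_univ_three] at h
    rw [hNdef]; simp only [star_mul', star_star]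
    linear_combination (β 0 * star (β 2) * star (M 0 0) * M 0 2) * hαu 0
      + (β 0 * star (β 2) * star (M 1 0) * M 1 2) * hαu 1
      + (β 0 * star (β 2) * star (M 2 0) * M 2 2) * hαu 2
      + (β 0 * star (β 2)) * h
  have hrow01 : N 0 0 * star (N 1 0) + N 0 1 * star (N 1 1) + N 0 2 * star (N 1 2) = 0 := by
    have h := hrow 0 1
    rw [if_neg (by decide), Fin.sum_univ_three] at h
    rw [hNdef]; simp only [star_mul', star_star]
    linear_combination (star (α 0) * α 1 * M 0 0 * star (M 1 0)) * hβu 0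
      + (star (α 0) * α 1 * M 0 1 * star (M 1 1)) * hβu 1
      + (star (α 0) * α 1 * M 0 2 * star (M 1 2)) * hβu 2
      + (star (α 0) * α 1) * h
  -- star of real casts
  have hstarR : ∀ r : ℝ, star ((r:ℂ)) = (r:ℂ) := fun r => Complex.conj_ofReal r
  -- substitute known first row/column values into hcol01
  rw [hNc 0, hNc 1, hNc 2, hNr 1, hstarR, hstarR, hstarR] at hcol01
  rw [hNc 0, hNc 1, hNc 2, hNr 2, hstarR, hstarR, hstarR] at hcol02
  rw [hNr 0, hNr 1, hNr 2, hNc 1, hstarR] at hrow01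
  simp only [M0, Matrix.cons_val_zero, Matrix.cons_val_one, Matrix.head_cons,
    Matrix.cons_val_two, Matrix.tail_cons] at hcol01 hcol02 hrow01
  push_cast at hcol01 hcol02 hrow01
  -- solve for N 1 1
  have hsq6c : ((sq6:ℝ):ℂ) * ((sq6:ℝ):ℂ) = 6 := by
    rw [← Complex.ofReal_mul, sq6_sq]; norm_num
  have hsq6ne : ((sq6:ℝ):ℂ) / 4 ≠ 0 := by
    simp only [ne_eq, div_eq_zero_iff, Complex.ofReal_eq_zero]
    push_neg
    exact ⟨sq6_pos.ne', by norm_num⟩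
  have hE1 : ((sq6:ℝ):ℂ)/4 * N 2 1 = -(3/16 + 1/4 * N 1 1) := by
    linear_combination hcol01
  have hn11 : Complex.normSq (N 1 1) = 9/16 := by
    rw [hNabs]; norm_num [feigeNu]
  have hn21 : Complex.normSq (N 2 1) = 3/8 := by
    rw [hNabs]; norm_num [feigeNu]; rfl
  have h2 := congrArg Complex.normSq hE1
  rw [_root_.map_mul, hn21] at h2
  rw [show ((sq6:ℝ):ℂ)/4 = ((sq6/4 : ℝ):ℂ) by push_cast; ring, Complex.normSq_ofReal] at h2
  have hsq : sq6/4 * (sq6/4) = 3/8 := by nlinarith [sq6_sq]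
  rw [hsq] at h2
  have h2' : Complex.normSq (((3/16:ℝ):ℂ) + ((1/4:ℝ):ℂ) * N 1 1) = 9/64 := by
    rw [show ((3/16:ℝ):ℂ) + ((1/4:ℝ):ℂ) * N 1 1 = (3/16 + 1/4 * N 1 1 : ℂ) by push_cast; ring]
    rw [show ((3:ℂ)/16 + 1/4 * N 1 1) = -(-(3/16 + 1/4 * N 1 1)) by ring, Complex.normSq_neg]
    rw [← h2]; norm_num
  rw [Complex.normSq_apply] at h2'
  simp only [Complex.add_re, Complex.add_im, Complex.mul_re, Complex.mul_im,
    Complex.ofReal_re, Complex.ofReal_im, zero_mul, mul_zero, sub_zero, add_zero, zero_add] at h2'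
  have hxy : (N 1 1).re * (N 1 1).re + (N 1 1).im * (N 1 1).im = 9/16 := by
    rw [← Complex.normSq_apply, hn11]
  have hx : (N 1 1).re = 3/4 := by nlinarith [h2', hxy]
  have hy : (N 1 1).im = 0 := by
    have h5 : (N 1 1).im * (N 1 1).im = 0 := by nlinarith [hxy, hx]
    exact mul_self_eq_zero.mp h5
  have hN11 : N 1 1 = ((3/4:ℝ):ℂ) := Complex.ext (by simp [hx]) (by simp [hy])
  have hN21 : N 2 1 = -(((sq6:ℝ):ℂ)/4) := by
    apply mul_left_cancel₀ hsq6ne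
    rw [hE1, hN11]
    push_cast
    linear_combination (1/16 : ℂ) * hsq6c
  rw [hN11] at hrow01
  rw [hstarR] at hrow01
  have h6 : ((sq6:ℝ):ℂ)/4 * star (N 1 2) = ((sq6:ℝ):ℂ)/4 * (-(((sq6:ℝ):ℂ)/4)) := by
    push_cast at hrow01 ⊢
    linear_combination hrow01 + (1/16 : ℂ) * hsq6c
  have h7 : star (N 1 2) = -(((sq6:ℝ):ℂ)/4) := mul_left_cancel₀ hsq6ne h6
  have hN12 : N 1 2 = -(((sq6:ℝ):ℂ)/4) := by
    have := congrArg star h7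
    rw [star_star] at this
    rw [this, star_neg, star_div₀, hstarR]
    norm_num
  rw [hN12] at hcol02
  have h8 : ((sq6:ℝ):ℂ)/4 * N 2 2 = ((sq6:ℝ):ℂ)/4 * (-(1/2)) := by
    push_cast at hcol02 ⊢
    linear_combination hcol02
  have hN22 : N 2 2 = -(1/2) := mul_left_cancel₀ hsq6ne h8
  -- all nine values of N
  have hNval : ∀ i j, N i j = ((M0 i j : ℝ):ℂ) := by
    intro i j
    fin_cases i
    · exact hNr j
    · fin_cases j
      · exact hNc 1
      · show N 1 1 = ((M0 1 1 : ℝ):ℂ); rw [hN11]; norm_num [M0]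
      · show N 1 2 = ((M0 1 2 : ℝ):ℂ); rw [hN12]; norm_num [show M0 1 2 = -(sq6/4) from rfl]
    · fin_cases j
      · exact hNc 2
      · show N 2 1 = ((M0 2 1 : ℝ):ℂ); rw [hN21]; norm_num [show M0 2 1 = -(sq6/4) from rfl]
      · show N 2 2 = ((M0 2 2 : ℝ):ℂ); rw [hN22]; norm_num [show M0 2 2 = -(1/2) from rfl]
  refine ⟨α, β, hαu, hβu, fun i j => ?_⟩
  have h9 : M i j = α i * β j * N i j := by
    rw [hNdef]; simp only
    linear_combination (-(β j * star (β j)) * M i j) * hαu i - (M i j) * hβu j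
  rw [h9, hNval i j]


private lemma houter (U : Matrix (Fin 3) (Fin 3) ℂ) (u : Fin 3 → ℂ) :
    U * outer u * Uᴴ = outer (U.mulVec u) := by
  ext a b
  simp [outer, Matrix.mul_apply, Matrix.vecMulVec_apply, Matrix.mulVec, dotProduct,
    Matrix.conjTranspose_apply, Finset.sum_mul, Finset.mul_sum, Fin.sum_univ_three]
  ring

private lemma houter_smul (c : ℂ) (hc : c * star c = 1) (u : Fin 3 → ℂ) :
    outer (c • u) = outer u := by
  ext a b
  simp only [outer, Matrix.vecMulVec_apply, Pi.star_apply, Pi.smul_apply, smul_eq_mul,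
    star_mul', RingHom.id_apply]
  calc c * u a * (star c * star (u b))
      = (c * star c) * (u a * star (u b)) := by ring
    _ = u a * star (u b) := by rw [hc]; ring

private lemma hvmv (u v w x : Fin 3 → ℂ) :
    Matrix.vecMulVec u (star v) * Matrix.vecMulVec w (star x)
      = (star v ⬝ᵥ w) • Matrix.vecMulVec u (star x) := by
  ext a b
  simp [Matrix.mul_apply, Matrix.vecMulVec_apply, dotProduct, Finset.sum_mul, Finset.mul_sum]
  congr 1; ext k; ring


/-- Pairs of `ν`-biased bases of `ℂ³` for the Feige matrix `ν` are unique up to a single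
unitary: if `({e_i}, {f_j})` and `({e'_i}, {f'_j})` are pairs of orthonormal bases of `ℂ³`
with `|⟨e_i, f_j⟩|² = ν_{ij}` and `|⟨e'_i, f'_j⟩|² = ν_{ij}` for all `i, j`, then there is
a unitary `U` with `U|e_i⟩⟨e_i|U* = |e'_i⟩⟨e'_i|` and `U|f_j⟩⟨f_j|U* = |f'_j⟩⟨f'_j|`
(same index labels, no relabeling). -/
theorem feige_nu_biased_bases_unique
    (e f e' f' : Fin 3 → (Fin 3 → ℂ))
    (he : ∀ i j, star (e i) ⬝ᵥ e j = if i = j then 1 else 0)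
    (hf : ∀ i j, star (f i) ⬝ᵥ f j = if i = j then 1 else 0)
    (he' : ∀ i j, star (e' i) ⬝ᵥ e' j = if i = j then 1 else 0)
    (hf' : ∀ i j, star (f' i) ⬝ᵥ f' j = if i = j then 1 else 0)
    (hbias : ∀ i j, ‖star (e i) ⬝ᵥ f j‖ ^ 2 = feigeNu i j)
    (hbias' : ∀ i j, ‖star (e' i) ⬝ᵥ f' j‖ ^ 2 = feigeNu i j) :
    ∃ U : Matrix (Fin 3) (Fin 3) ℂ, Uᴴ * U = 1 ∧ U * Uᴴ = 1 ∧
      (∀ i, U * outer (e i) * Uᴴ = outer (e' i)) ∧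
      (∀ j, U * outer (f j) * Uᴴ = outer (f' j)) := by
  classical
  obtain ⟨hcolM, hrowM⟩ := transition_unitary e f he hf
  obtain ⟨hcolM', hrowM'⟩ := transition_unitary e' f' he' hf'
  obtain ⟨α, β, hαu, hβu, hMval⟩ :=
    rigidity (fun i j => star (e i) ⬝ᵥ f j) hcolM hrowM
      (fun i j => by rw [← Complex.sq_norm]; exact hbias i j)
  obtain ⟨α', β', hα'u, hβ'u, hM'val⟩ :=
    rigidity (fun i j => star (e' i) ⬝ᵥ f' j) hcolM' hrowM'
      (fun i j => by rw [← Complex.sq_norm]; exact hbias' i j)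
  set c : Fin 3 → ℂ := fun i => α' i * star (α i) with hcdef
  set d : Fin 3 → ℂ := fun j => β j * star (β' j) with hddef
  have hcu : ∀ i, star (c i) * c i = 1 := by
    intro i
    rw [hcdef]; simp only [star_mul', star_star]
    linear_combination (α' i * star (α' i)) * hαu i + hα'u i
  have hcu2 : ∀ i, c i * star (c i) = 1 := by
    intro i
    rw [← hcu i]; ring
  have hdu : ∀ j, d j * star (d j) = 1 := by
    intro j
    rw [hddef]; simp only [star_mul', star_star]
    linear_combination (β' j * star (β' j)) * hβu j + hβ'u j
  have hkey : ∀ i j, c i * (star (e i) ⬝ᵥ f j) = d j * (star (e' i) ⬝ᵥ f' j) := by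
    intro i j
    rw [hMval i j, hM'val i j, hcdef, hddef]
    simp only
    linear_combination (α' i * β j * ((M0 i j : ℝ):ℂ)) * hαu i
      - (α' i * β j * ((M0 i j : ℝ):ℂ)) * hβ'u j
  set U : Matrix (Fin 3) (Fin 3) ℂ :=
    ∑ i, c i • Matrix.vecMulVec (e' i) (star (e i)) with hUdef
  have hUH : Uᴴ = ∑ i, star (c i) • Matrix.vecMulVec (e i) (star (e' i)) := by
    rw [hUdef]
    ext a b
    simp only [Matrix.conjTranspose_apply, Matrix.sum_apply, Matrix.smul_apply,
      Matrix.vecMulVec_apply, Pi.star_apply, star_sum, star_mul', star_star, smul_eq_mul]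
    exact Finset.sum_congr rfl fun i _ => by ring
  -- Uᴴ * U = 1
  have hUHU : Uᴴ * U = 1 := by
    rw [hUH, hUdef, Finset.sum_mul]
    calc ∑ i, (star (c i) • Matrix.vecMulVec (e i) (star (e' i)))
          * (∑ k, c k • Matrix.vecMulVec (e' k) (star (e k)))
        = ∑ i, ∑ k, (star (c i) * c k * (star (e' i) ⬝ᵥ e' k))
            • Matrix.vecMulVec (e i) (star (e k)) := by
          refine Finset.sum_congr rfl fun i _ => ?_
          rw [Finset.mul_sum]
          refine Finset.sum_congr rfl fun k _ => ?_
          rw [Matrix.smul_mul, Matrix.mul_smul, hvmv, smul_smul, smul_smul]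
      _ = ∑ i, Matrix.vecMulVec (e i) (star (e i)) := by
          refine Finset.sum_congr rfl fun i _ => ?_
          have hterm : ∀ k, (star (c i) * c k * (star (e' i) ⬝ᵥ e' k))
              • Matrix.vecMulVec (e i) (star (e k))
              = if i = k then Matrix.vecMulVec (e i) (star (e i)) else 0 := by
            intro k
            by_cases h : i = k
            · subst h
              rw [he' i i, if_pos rfl, if_pos rfl, mul_one, hcu i, one_smul]
            · rw [he' i k, if_neg h, if_neg h, mul_zero, zero_smul]
          rw [Finset.sum_congr rfl fun k _ => hterm k, Finset.sum_ite_eq]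
          simp
      _ = 1 := by
          ext a b
          simp only [Matrix.sum_apply, Matrix.vecMulVec_apply, Pi.star_apply]
          rw [comp3 e he a b, Matrix.one_apply]
  have hUUH : U * Uᴴ = 1 := by
    rw [hUH, hUdef, Finset.sum_mul]
    calc ∑ i, (c i • Matrix.vecMulVec (e' i) (star (e i)))
          * (∑ k, star (c k) • Matrix.vecMulVec (e k) (star (e' k)))
        = ∑ i, ∑ k, (c i * star (c k) * (star (e i) ⬝ᵥ e k))
            • Matrix.vecMulVec (e' i) (star (e' k)) := by
          refine Finset.sum_congr rfl fun i _ => ?_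
          rw [Finset.mul_sum]
          refine Finset.sum_congr rfl fun k _ => ?_
          rw [Matrix.smul_mul, Matrix.mul_smul, hvmv, smul_smul, smul_smul]
      _ = ∑ i, Matrix.vecMulVec (e' i) (star (e' i)) := by
          refine Finset.sum_congr rfl fun i _ => ?_
          have hterm : ∀ k, (c i * star (c k) * (star (e i) ⬝ᵥ e k))
              • Matrix.vecMulVec (e' i) (star (e' k))
              = if i = k then Matrix.vecMulVec (e' i) (star (e' i)) else 0 := by
            intro k
            by_cases h : i = k
            · subst h
              rw [he i i, if_pos rfl, if_pos rfl, mul_one, hcu2 i, one_smul]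
            · rw [he i k, if_neg h, if_neg h, mul_zero, zero_smul]
          rw [Finset.sum_congr rfl fun k _ => hterm k, Finset.sum_ite_eq]
          simp
      _ = 1 := by
          ext a b
          simp only [Matrix.sum_apply, Matrix.vecMulVec_apply, Pi.star_apply]
          rw [comp3 e' he' a b, Matrix.one_apply]
  -- action of U on the bases
  have hUapp : ∀ (v : Fin 3 → ℂ) (a : Fin 3),
      U.mulVec v a = ∑ i, c i * (star (e i) ⬝ᵥ v) * e' i a := by
    intro v a
    rw [hUdef]
    simp only [Matrix.mulVec, dotProduct, Matrix.sum_apply, Matrix.smul_apply,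
      Matrix.vecMulVec_apply, Pi.star_apply, smul_eq_mul, Finset.sum_mul]
    rw [Finset.sum_comm]
    refine Finset.sum_congr rfl fun i _ => ?_
    rw [Finset.mul_sum, Finset.sum_mul]
    refine Finset.sum_congr rfl fun b _ => by ring
  have hUe : ∀ k, U.mulVec (e k) = c k • e' k := by
    intro k
    funext a
    rw [hUapp]
    calc ∑ i, c i * (star (e i) ⬝ᵥ e k) * e' i a
        = ∑ i, (if i = k then c i * e' i a else 0) := by
          refine Finset.sum_congr rfl fun i _ => ?_
          rw [he i k]
          by_cases h : i = k <;> simp [h]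
      _ = c k * e' k a := by rw [Finset.sum_ite_eq']; simp
      _ = (c k • e' k) a := by simp
  have hUf : ∀ j, U.mulVec (f j) = d j • f' j := by
    intro j
    funext a
    rw [hUapp]
    calc ∑ i, c i * (star (e i) ⬝ᵥ f j) * e' i a
        = ∑ i, d j * ((star (e' i) ⬝ᵥ f' j) * e' i a) := by
          refine Finset.sum_congr rfl fun i _ => ?_
          rw [hkey i j]; ring
      _ = d j * ∑ i, (star (e' i) ⬝ᵥ f' j) * e' i a := by rw [Finset.mul_sum]
      _ = d j * f' j a := by
          congr 1
          simp only [dotProduct, Pi.star_apply, Finset.sum_mul]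
          rw [Finset.sum_comm]
          calc ∑ b, ∑ i, star (e' i b) * f' j b * e' i a
              = ∑ b, (∑ i, e' i a * star (e' i b)) * f' j b := by
                refine Finset.sum_congr rfl fun b _ => ?_
                rw [Finset.sum_mul]
                exact Finset.sum_congr rfl fun i _ => by ring
            _ = ∑ b, (if a = b then 1 else 0) * f' j b := by
                refine Finset.sum_congr rfl fun b _ => ?_
                rw [comp3 e' he' a b]
            _ = f' j a := by
                simp only [ite_mul, one_mul, zero_mul]
                rw [Finset.sum_ite_eq]
                simp
      _ = (d j • f' j) a := by simp
  refine ⟨U, hUHU, hUUH, fun k => ?_, fun j => ?_⟩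
  · rw [houter, hUe k, houter_smul (c k) (hcu2 k)]
  · rw [houter, hUf j, houter_smul (d j) (hdu j)]
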